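/- Let H and K be groups, with K acting on H on the right by automorphisms (written h^k), and suppose i : F → K is a homomorphism from a subgroup F ≤ H such that h^{i(f)} = f⁻¹hf for all f ∈ F, h ∈ H; F is stable under the K-action; and i(f^k) = k⁻¹ i(f) k. If X ⊆ H is a set of representatives for the right cosets F\H, then the map K × X → (K ⋉ H)/Ξ, (k, x) ↦ [(k, x)], is a bijection, where Ξ = { (i(f), f⁻¹) : f ∈ F }. -/

import Mathlib

/-- A right action of `G` on `S` by group automorphisms, i.e. an
anti-homomorphism `G → Aut S`; we write `act φ g` for `φ^g`. -/
structure RightAutAction (S G : Type*) [Group S] [Group G] where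
  act : S → G → S
  act_mul : ∀ φ ψ g, act (φ * ψ) g = act φ g * act ψ g
  act_one : ∀ φ, act φ 1 = φ
  act_act : ∀ φ g g', act (act φ g) g' = act φ (g * g')

theorem RightAutAction.act_one_left {S G : Type*} [Group S] [Group G]
    (α : RightAutAction S G) (g : G) : α.act 1 g = 1 := by
  have h2 : α.act 1 g = α.act 1 g * α.act 1 g := by
    simpa using (α.act_mul 1 1 g).symm
  simpa using h2

theorem RightAutAction.act_inv {S G : Type*} [Group S] [Group G]
    (α : RightAutAction S G) (φ : S) (g : G) :
    α.act φ⁻¹ g = (α.act φ g)⁻¹ := by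
  have h := α.act_mul φ⁻¹ φ g
  rw [inv_mul_cancel, α.act_one_left] at h
  exact eq_inv_of_mul_eq_one_left h.symm

/-- The semidirect product `G ⋉ S` determined by the right action `α`,
with multiplication `(g, φ)(g', φ') = (g g', φ^{g'} φ')`.  (A type synonym
for `G × S` carrying this group structure.) -/
def SD (S G : Type*) [Group S] [Group G] (_α : RightAutAction S G) : Type _ := G × S

/-- The element `(g, φ)` of `G ⋉ S`. -/
def SD.mk {S G : Type*} [Group S] [Group G] {α : RightAutAction S G}
    (g : G) (φ : S) : SD S G α := (g, φ)

instance SD.instGroup {S G : Type*} [Group S] [Group G] (α : RightAutAction S G) :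
    Group (SD S G α) where
  mul x y := SD.mk (Prod.fst (x : G × S) * Prod.fst (y : G × S))
    (α.act (Prod.snd (x : G × S)) (Prod.fst (y : G × S)) * Prod.snd (y : G × S))
  one := SD.mk 1 1
  inv x := SD.mk (Prod.fst (x : G × S))⁻¹
    (α.act (Prod.snd (x : G × S)) (Prod.fst (x : G × S))⁻¹)⁻¹
  mul_assoc := by
    rintro ⟨g1, s1⟩ ⟨g2, s2⟩ ⟨g3, s3⟩
    refine Prod.ext ?_ ?_
    · show (g1 * g2) * g3 = g1 * (g2 * g3)
      exact mul_assoc ..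
    · show α.act (α.act s1 g2 * s2) g3 * s3 =
        α.act s1 (g2 * g3) * (α.act s2 g3 * s3)
      simp [α.act_mul, α.act_act, mul_assoc]
  one_mul := by
    rintro ⟨g, s⟩
    show SD.mk ((1 : G) * g) (α.act (1 : S) g * s) = (⟨g, s⟩ : G × S)
    simp [SD.mk, RightAutAction.act_one_left]
    rfl
  mul_one := by
    rintro ⟨g, s⟩
    show SD.mk (g * (1 : G)) (α.act s (1 : G) * (1 : S)) = (⟨g, s⟩ : G × S)
    simp [SD.mk, α.act_one]
    rfl
  inv_mul_cancel := by
    rintro ⟨g, s⟩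
    show SD.mk _ _ = SD.mk 1 1
    simp [SD.mk, α.act_inv, α.act_act, α.act_one]
    rfl

/-!
STATEMENT 19.  `K` acts on `H` on the right by automorphisms, `F ≤ H`,
`i : F → K` a homomorphism with `h^{i f} = f⁻¹ h f`, `F` stable under the
`K`-action and `i (f^k) = k⁻¹ (i f) k`.  If `X ⊆ H` is a set of
representatives for the right cosets `F\H` (i.e. `(f, x) ↦ f x` is a
bijection `F × X → H`), then `(k, x) ↦ [(k, x)]` is a bijection
`K × X → (K ⋉ H)/Ξ`, where `Ξ = { (i f, f⁻¹) | f ∈ F }`.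
-/
theorem bijection_K_times_reps
    (H K : Type*) [Group H] [Group K] (α : RightAutAction H K)
    (F : Subgroup H) (i : F →* K)
    (hA2 : ∀ (f : F) (h : H), α.act h (i f) = (f : H)⁻¹ * h * (f : H))
    (hA3 : ∀ (f : F) (k : K), α.act (f : H) k ∈ F)
    (hA3' : ∀ (f : F) (k : K), i ⟨α.act (f : H) k, hA3 f k⟩ = k⁻¹ * i f * k)
    (X : Set H)
    (hX : Function.Bijective (fun q : F × X => (q.1 : H) * (q.2 : H)))
    (Ξ : Subgroup (SD H K α))
    (hΞ : (Ξ : Set (SD H K α)) =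
      {p : SD H K α | ∃ f : F, p = SD.mk (i f) (f : H)⁻¹})
    [Ξ.Normal] :
    Function.Bijective (fun p : K × X =>
      (QuotientGroup.mk (SD.mk p.1 (p.2 : H)) : SD H K α ⧸ Ξ)) := by
  have mul_def : ∀ (g g' : K) (φ φ' : H),
      (SD.mk g φ * SD.mk g' φ' : SD H K α) = SD.mk (g * g') (α.act φ g' * φ') :=
    fun _ _ _ _ => rfl
  have inv_def : ∀ (g : K) (φ : H),
      (SD.mk g φ : SD H K α)⁻¹ = SD.mk g⁻¹ (α.act φ g⁻¹)⁻¹ := fun _ _ => rfl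
  constructor
  · rintro ⟨k1, x1⟩ ⟨k2, x2⟩ hq
    simp only at hq
    rw [QuotientGroup.eq, inv_def, mul_def] at hq
    have hq' : (SD.mk (k1⁻¹ * k2) ((α.act (x1 : H) (k1⁻¹ * k2))⁻¹ * (x2 : H))
        : SD H K α) ∈ (Ξ : Set (SD H K α)) := by
      convert hq using 2
      rw [α.act_inv, α.act_act]
      exact SetLike.mem_coe
    rw [hΞ] at hq'
    obtain ⟨f, hf⟩ := hq'
    have hf' : ((k1⁻¹ * k2, (α.act (x1 : H) (k1⁻¹ * k2))⁻¹ * (x2 : H)) : K × H)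
        = (i f, ((f : H))⁻¹) := hf
    obtain ⟨h1, h2⟩ := Prod.mk.injEq .. ▸ hf'
    rw [h1, hA2] at h2
    have hx : (f : H) * (x2 : H) = ((1 : F) : H) * (x1 : H) := by
      have hx2 : (x2 : H) = ((f : H)⁻¹ * (x1 : H) * (f : H)) * (f : H)⁻¹ :=
        inv_mul_eq_iff_eq_mul.mp h2
      rw [hx2]
      push_cast
      group
    have := hX.injective (a₁ := (f, x2)) (a₂ := (1, x1)) hx
    obtain ⟨hfe, hxe⟩ := Prod.mk.injEq .. ▸ this
    have hk : k1 = k2 := by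
      have : k1⁻¹ * k2 = 1 := by rw [h1, hfe, map_one]
      exact inv_mul_eq_one.mp this
    rw [hk, hxe]
  · intro q
    obtain ⟨p, rfl⟩ := QuotientGroup.mk_surjective q
    obtain ⟨k, h⟩ := p
    obtain ⟨⟨f, x⟩, hfx⟩ := hX.surjective h
    simp only at hfx
    refine ⟨(k * i f, x), ?_⟩
    show QuotientGroup.mk (SD.mk (k * i f) (x : H)) =
      QuotientGroup.mk (SD.mk k h : SD H K α)
    rw [QuotientGroup.eq, inv_def, mul_def, ← SetLike.mem_coe, hΞ]
    refine ⟨f⁻¹, ?_⟩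
    have e1 : (k * i f)⁻¹ * k = i f⁻¹ := by rw [map_inv]; group
    have e2 : α.act (α.act (x : H) (k * i f)⁻¹)⁻¹ k * h = (((f⁻¹ : F) : H))⁻¹ := by
      rw [← α.act_inv, α.act_act]
      have : (k * i f)⁻¹ * k = (i f⁻¹ : K) := e1
      rw [this, hA2 f⁻¹, ← hfx]
      push_cast
      group
    show ((((k * i f)⁻¹ * k : K), (α.act (α.act (x : H) (k * i f)⁻¹)⁻¹ k * h : H)) : K × H)
      = ((i f⁻¹ : K), (((f⁻¹ : F) : H))⁻¹)
    rw [e1, e2]
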